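/- arXiv:1301.2133 — 5 statements merged into one kernel-verified Lean document; each statement's English description precedes it below -/
import Mathlib

section
/- Let B be a skew-symmetric r×r integer matrix, ex ⊆ {1,…,r} a set of indices (the mutable indices), k ∈ ex, and G ∈ ℤ^r an integer column vector such that B_j G = 0 for every j ∈ ex, where B_j denotes the j-th row of B. Let E = E_{B,k} be the mutation matrix, B' = E B Eᵀ and G' = Eᵀ G. Then (B')_j G' = 0 for every j ∈ ex; that is, the mutated vector G' is again a grading for the mutated exchange matrix B'. -/
/-- If `G` is a grading for the skew-symmetric exchange matrix `B` with
respect to the set `ex` of mutable indices (i.e. `B_j G = 0` for all `j ∈ ex`), and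
`k ∈ ex`, then the mutated vector `G' = Eᵀ G` is a grading for the mutated exchange
matrix `B' = E B Eᵀ`, i.e. `(B')_j G' = 0` for every `j ∈ ex`. -/
theorem mutated_grading_is_grading (r : ℕ) (hr : 0 < r)
    (B : Matrix (Fin r) (Fin r) ℤ) (hB : B.transpose = -B)
    (ex : Finset (Fin r)) (k : Fin r) (hk : k ∈ ex)
    (G : Fin r → ℤ) (hG : ∀ j ∈ ex, ∑ i, B j i * G i = 0)
    (E : Matrix (Fin r) (Fin r) ℤ)
    (hE : ∀ i j, E i j =
      if j = k then (if i = k then -1 else max 0 (-(B i k)))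
      else (if i = j then 1 else 0))
    (B' : Matrix (Fin r) (Fin r) ℤ) (hB' : B' = E * B * E.transpose)
    (G' : Fin r → ℤ) (hG' : G' = E.transpose.mulVec G) :
    ∀ j ∈ ex, ∑ i, B' j i * G' i = 0 := by
  have hEkk : E k k = -1 := by simp [hE]
  have hEik : ∀ i, i ≠ k → E i k = max 0 (-(B i k)) := by
    intro i hi; simp [hE, hi]
  have hEo : ∀ i s, s ≠ k → E i s = if i = s then 1 else 0 := by
    intro i s hs; simp [hE, hs]
  -- First: E * E = 1
  have hEE : E * E = 1 := by
    ext i j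
    rw [Matrix.mul_apply]
    by_cases hj : j = k
    · rw [hj]
      by_cases hi : i = k
      · rw [hi]
        rw [Finset.sum_eq_single k]
        · rw [hEkk]; simp [Matrix.one_apply, hi, hj]
        · intro s _ hs
          rw [hEo k s hs, if_neg (fun h : k = s => hs h.symm), zero_mul]
        · simp
      · have hterm : ∀ s : Fin r, E i s * E s k =
            (if s = i then max 0 (-(B i k)) else 0) +
            (if s = k then -(max 0 (-(B i k))) else 0) := by
          intro s
          by_cases hs : s = k
          · rw [hs, hEik i hi, hEkk, if_neg (fun h : k = i => hi h.symm)]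
            simp
          · rw [hEo i s hs, hEik s hs, if_neg hs]
            by_cases hsi : s = i
            · rw [hsi, if_pos rfl, if_pos rfl, one_mul, add_zero]
            · rw [if_neg (fun h : i = s => hsi h.symm), if_neg hsi, zero_mul, add_zero]
        rw [Finset.sum_congr rfl (fun s _ => hterm s), Finset.sum_add_distrib]
        simp [Matrix.one_apply, hi]
    · have hterm : ∀ s : Fin r, E i s * E s j = if s = j then E i j else 0 := by
        intro s
        by_cases hs : s = j
        · rw [hs, hEo j j hj, if_pos rfl, mul_one, if_pos rfl]
        · rw [hEo s j hj, if_neg hs, if_neg hs, mul_zero]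
      rw [Finset.sum_congr rfl (fun s _ => hterm s), Finset.sum_ite_eq']
      simp [Matrix.one_apply, hEo i j hj]
  have hET : E.transpose * E.transpose = 1 := by
    rw [← Matrix.transpose_mul, hEE, Matrix.transpose_one]
  intro j hj
  have key : ∑ i, B' j i * G' i = (E * B).mulVec G j := by
    have : ∑ i, B' j i * G' i = B'.mulVec G' j := rfl
    rw [this, hB', hG', Matrix.mulVec_mulVec, Matrix.mul_assoc (E * B), hET,
      Matrix.mul_one]
  rw [key, ← Matrix.mulVec_mulVec, Matrix.mulVec, dotProduct]
  apply Finset.sum_eq_zero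
  intro s _
  have hBG : ∀ t ∈ ex, B.mulVec G t = 0 := fun t ht => by
    simpa [Matrix.mulVec, dotProduct] using hG t ht
  by_cases hs : s = k
  · subst hs
    rw [hBG s hk, mul_zero]
  · by_cases hsj : s = j
    · subst hsj
      rw [hBG s hj, mul_zero]
    · rw [hEo j s hs, if_neg (fun h : j = s => hsj h.symm), zero_mul]
end

section
/- In the quantum torus setting, let B be a skew-symmetric r×r integer matrix, k ∈ {1,…,r} an index, and G ∈ ℤ^r with B_k G = 0 (B_k the k-th row of B). Set X̃_i = v^{G_i} X_i and let M̃ be the exchange monomial built from the X̃_i with the same matrix L. Then M̃(b_k^+) + M̃(b_k^−) = v^{b_k^+ · G} ( M(b_k^+) + M(b_k^−) ); that is, the quantum cluster variable obtained by mutating the rescaled cluster in direction k equals v^{G'_k} times the variable obtained by mutating the original cluster, where G'_k = b_k^+ · G = b_k^− · G. -/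
/-- In the quantum torus setting, if `G` is a grading in direction `k`
(`B_k G = 0`), then the quantum cluster variable obtained by mutating the rescaled
cluster in direction `k` equals `v^(b_k^+ · G)` times the variable obtained by mutating
the original cluster:
`M̃(b_k^+) + M̃(b_k^-) = v^(b_k^+ · G) (M(b_k^+) + M(b_k^-))`. -/
theorem rescaled_mutation (K : Type*) [Field K] (A : Type*) [Ring A] [Algebra K A]
    (v : K) (hv : v ≠ 0) (r : ℕ) (hr : 0 < r)
    (L : Matrix (Fin r) (Fin r) ℤ) (hL : L.transpose = -L)
    (X : Fin r → Aˣ)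
    (hX : ∀ i j, (X i : A) * (X j : A) =
      algebraMap K A ((v ^ 2) ^ L i j) * ((X j : A) * (X i : A)))
    (B : Matrix (Fin r) (Fin r) ℤ) (hB : B.transpose = -B) (k : Fin r)
    (G : Fin r → ℤ) (hG : ∑ i, B k i * G i = 0)
    (Xt : Fin r → Aˣ)
    (hXt : ∀ i, Xt i =
      Units.map (algebraMap K A).toMonoidHom (Units.mk0 v hv ^ G i) * X i)
    (M Mt : (Fin r → ℤ) → A)
    (hM : ∀ a, M a =
      algebraMap K A (v ^ (∑ i, ∑ j, if i < j then a i * a j * L j i else 0)) *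
        ((List.finRange r).map (fun i => ((X i ^ a i : Aˣ) : A))).prod)
    (hMt : ∀ a, Mt a =
      algebraMap K A (v ^ (∑ i, ∑ j, if i < j then a i * a j * L j i else 0)) *
        ((List.finRange r).map (fun i => ((Xt i ^ a i : Aˣ) : A))).prod)
    (bkp bkm : Fin r → ℤ)
    (hbkp : ∀ i, bkp i = if i = k then -1 else max (B i k) 0)
    (hbkm : ∀ i, bkm i = if i = k then -1 else max (-(B i k)) 0) :
    Mt bkp + Mt bkm = algebraMap K A (v ^ (∑ i, bkp i * G i)) * (M bkp + M bkm) := by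

  have hc : ∀ (c : K) (x : A), x * algebraMap K A c = algebraMap K A c * x :=
    fun c x => (Algebra.commutes c x).symm
  -- pointwise: (Xt i)^a = v^(G i * a) * (X i)^a
  have hpt : ∀ (i : Fin r) (a : ℤ), ((Xt i ^ a : Aˣ) : A) =
      algebraMap K A (v ^ (G i * a)) * ((X i ^ a : Aˣ) : A) := by
    intro i a
    rw [hXt i]
    set u : Aˣ := Units.map (algebraMap K A).toMonoidHom (Units.mk0 v hv ^ G i) with hu
    have hcom : Commute u (X i) := by
      apply Units.ext
      show (u : A) * (X i : A) = (X i : A) * (u : A)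
      have : (u : A) = algebraMap K A (v ^ G i) := by
        rw [hu, Units.coe_map]
        simp [Units.val_zpow_eq_zpow_val]
      rw [this, Algebra.commutes]
    rw [Commute.mul_zpow hcom, Units.val_mul]
    congr 1
    have : u ^ a = Units.map (algebraMap K A).toMonoidHom (Units.mk0 v hv ^ (G i * a)) := by
      rw [hu, ← map_zpow, ← zpow_mul]
    rw [this, Units.coe_map]
    simp [Units.val_zpow_eq_zpow_val]
  -- list product lemma
  have key : ∀ (a : Fin r → ℤ) (l : List (Fin r)),
      (l.map (fun i => ((Xt i ^ a i : Aˣ) : A))).prod =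
        algebraMap K A (v ^ (l.map (fun i => G i * a i)).sum) *
          (l.map (fun i => ((X i ^ a i : Aˣ) : A))).prod := by
    intro a l
    induction l with
    | nil => simp
    | cons i t ih =>
      simp only [List.map_cons, List.prod_cons, List.sum_cons]
      rw [hpt, ih, zpow_add₀ hv, map_mul, mul_assoc, mul_assoc]
      congr 1
      rw [← mul_assoc, hc, mul_assoc]
  have main : ∀ a, Mt a = algebraMap K A (v ^ (∑ i, a i * G i)) * M a := by
    intro a
    have hs : ((List.finRange r).map (fun i => G i * a i)).sum = ∑ i, a i * G i := by
      rw [← Fin.sum_univ_def]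
      exact Finset.sum_congr rfl (fun i _ => mul_comm _ _)
    rw [hMt, hM, key a (List.finRange r), ← mul_assoc, ← map_mul, ← mul_assoc, ← map_mul,
      ← zpow_add₀ hv, ← zpow_add₀ hv, hs]
    congr 3
    ring
  have hBkk : B k k = 0 := by
    have := congrArg (fun m => m k k) hB
    simp [Matrix.transpose_apply] at this
    omega
  have hsum : ∑ i, bkp i * G i = ∑ i, bkm i * G i := by
    have h1 : ∀ i, bkp i * G i = bkm i * G i + B i k * G i := by
      intro i
      rcases eq_or_ne i k with rfl | h
      · rw [hbkp, hbkm]; simp [hBkk]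
      · rw [hbkp, hbkm, if_neg h, if_neg h]
        have : max (B i k) 0 = max (-(B i k)) 0 + B i k := by omega
        rw [this]; ring
    have h2 : ∑ i, B i k * G i = 0 := by
      have h3 : ∀ i, B i k = -B k i := by
        intro i
        have := congrArg (fun m => m k i) hB
        simp [Matrix.transpose_apply] at this
        omega
      calc ∑ i, B i k * G i = ∑ i, -(B k i * G i) := by
            exact Finset.sum_congr rfl (fun i _ => by rw [h3 i]; ring)
        _ = -∑ i, B k i * G i := by rw [Finset.sum_neg_distrib]
        _ = 0 := by rw [hG]; ring
    calc ∑ i, bkp i * G i = ∑ i, (bkm i * G i + B i k * G i) :=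
          Finset.sum_congr rfl (fun i _ => h1 i)
      _ = (∑ i, bkm i * G i) + ∑ i, B i k * G i := Finset.sum_add_distrib
      _ = ∑ i, bkm i * G i := by rw [h2]; ring
  rw [main bkp, main bkm, hsum, mul_add]
end

section
/- Let K be a field, A an associative unital K-algebra, v a nonzero element of K, and q = v². Let X_1,…,X_r and z be units of A with z X_j = q^{t_j} X_j z for integers t_1,…,t_r. Let a_1,…,a_r and u_1,…,u_r be integers and set X̃_i = v^{t_i u_i} X_i z^{u_i}. Then Π_{i=1}^{r} X̃_i^{a_i} = q^{Σ_{1≤i<j≤r} a_i a_j t_j u_i} · v^{Σ_{i=1}^{r} a_i² t_i u_i} · X_1^{a_1} ⋯ X_r^{a_r} · z^{Σ_{i=1}^{r} a_i u_i}, where all products over indices are taken in increasing order. -/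
section
variable {G : Type*} [Group G]

lemma aux1 (w z x : G) (hw : ∀ g : G, Commute w g) (c : ℤ)
    (h : z * x = w ^ c * (x * z)) (n : ℤ) :
    z * x ^ n = w ^ (c * n) * (x ^ n * z) := by
  have hconj : z * x * z⁻¹ = w ^ c * x := by rw [h]; group
  have key : z * x ^ n * z⁻¹ = w ^ (c * n) * x ^ n := by
    rw [← conj_zpow, hconj, ((hw x).zpow_left c).mul_zpow, ← zpow_mul]
  have h2 := congrArg (· * z) key
  simp only [inv_mul_cancel_right] at h2
  rw [h2, mul_assoc]

lemma aux2 (w z x : G) (hw : ∀ g : G, Commute w g) (c : ℤ)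
    (h : z * x = w ^ c * (x * z)) (m n : ℤ) :
    z ^ m * x ^ n = w ^ (c * m * n) * (x ^ n * z ^ m) := by
  have h' : x * z = w ^ (-c) * (z * x) := by rw [h]; group
  have h2 := aux1 w x z hw (-c) h' m
  have h3 : z ^ m * x = w ^ (c * m) * (x * z ^ m) := by
    rw [h2]; group
  have h4 := aux1 w (z ^ m) x hw (c * m) h3 n
  exact h4
end

section
variable {G : Type*} [Group G]

lemma move {w : G} (hw : ∀ g : G, Commute w g) (e : ℤ) (g h : G) :
    g * (w ^ e * h) = w ^ e * (g * h) := by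
  rw [← mul_assoc, ((hw g).zpow_left e).symm.eq, mul_assoc]

lemma move2 {w : G} (hw : ∀ g : G, Commute w g) (e : ℤ) (g : G) :
    g * w ^ e = w ^ e * g := ((hw g).zpow_left e).symm.eq

lemma aux3nat (w z x : G) (hw : ∀ g : G, Commute w g) (c : ℤ)
    (h : z * x = w ^ (2 * c) * (x * z)) (n : ℕ) :
    (w ^ c * x * z) ^ (n : ℤ) = w ^ (c * (n : ℤ) ^ 2) * (x ^ (n : ℤ) * z ^ (n : ℤ)) := by
  induction n with
  | zero => simp
  | succ k ih =>
    have hzx : ∀ m : ℤ, ∀ g : G, z ^ m * (x * g) = w ^ (2 * c * m) * (x * (z ^ m * g)) := by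
      intro m g
      have h2 := aux2 w z x hw (2 * c) h m 1
      simp only [zpow_one, mul_one] at h2
      rw [← mul_assoc, h2]
      simp only [mul_assoc]
    have hcast : ((k + 1 : ℕ) : ℤ) = (k : ℤ) + 1 := by push_cast; ring
    rw [hcast, zpow_add_one, ih, zpow_add_one x, zpow_add_one z]
    simp only [mul_assoc]
    rw [move hw c (z ^ (k:ℤ)), move hw c (x ^ (k:ℤ)), move hw c (w ^ (c * (k:ℤ)^2)),
      hzx (k:ℤ) z, move hw (2*c*(k:ℤ)) (x ^ (k:ℤ)),
      ← mul_assoc (w ^ c), ← zpow_add, ← mul_assoc (w ^ (c + c * (k:ℤ)^2)), ← zpow_add]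
    congr 1
    ring

lemma aux3 (w z x : G) (hw : ∀ g : G, Commute w g) (c : ℤ)
    (h : z * x = w ^ (2 * c) * (x * z)) (n : ℤ) :
    (w ^ c * x * z) ^ n = w ^ (c * n ^ 2) * (x ^ n * z ^ n) := by
  obtain ⟨m, rfl | rfl⟩ := n.eq_nat_or_neg
  · exact aux3nat w z x hw c h m
  · have hinv : z⁻¹ * x⁻¹ = w ^ (2 * c) * (x⁻¹ * z⁻¹) := by
      have h2 := aux2 w z x hw (2 * c) h (-1) (-1)
      rw [show (2 * c * (-1) * (-1) : ℤ) = 2 * c by ring] at h2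
      simpa using h2
    have hYinv : (w ^ c * x * z)⁻¹ = w ^ c * x⁻¹ * z⁻¹ := by
      rw [mul_inv_rev, mul_inv_rev, ← zpow_neg]
      calc z⁻¹ * (x⁻¹ * w ^ (-c)) = z⁻¹ * x⁻¹ * w ^ (-c) := by rw [mul_assoc]
        _ = w ^ (2 * c) * (x⁻¹ * z⁻¹) * w ^ (-c) := by rw [hinv]
        _ = w ^ c * x⁻¹ * z⁻¹ := by
            rw [mul_assoc, move2 hw (-c) (x⁻¹ * z⁻¹), ← mul_assoc, ← zpow_add,
              show (2 * c + -c : ℤ) = c by ring, mul_assoc]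
    have key := aux3nat w z⁻¹ x⁻¹ hw c hinv m
    rw [← hYinv, inv_zpow, ← zpow_neg, inv_zpow, ← zpow_neg, inv_zpow, ← zpow_neg] at key
    rw [key]
    congr 2
    ring
end

section
variable {G : Type*} [Group G]

lemma nest {p q c d : G} (hpq : p * q = c * (q * d)) (g : G) :
    p * (q * g) = c * (q * (d * g)) := by
  rw [← mul_assoc, hpq]; simp only [mul_assoc]

lemma aux4 (w z : G) (hw : ∀ g : G, Commute w g) (l : List (G × ℤ))
    (h : ∀ p ∈ l, z * p.1 = w ^ p.2 * (p.1 * z)) :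
    z * (l.map Prod.fst).prod = w ^ ((l.map Prod.snd).sum) * ((l.map Prod.fst).prod * z) := by
  induction l with
  | nil => simp
  | cons p l ih =>
    have h1 := h p List.mem_cons_self
    have h2 := ih (fun q hq => h q (List.mem_cons_of_mem _ hq))
    simp only [List.map_cons, List.prod_cons, List.sum_cons]
    rw [← mul_assoc, h1, mul_assoc, mul_assoc, h2, move hw _ p.1, ← mul_assoc, ← zpow_add]
    simp only [mul_assoc]

lemma grp (w z : G) (hw : ∀ g : G, Commute w g) :
    ∀ (r : ℕ) (X : Fin r → G) (t a u : Fin r → ℤ),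
      (∀ j, z * X j = w ^ (2 * t j) * (X j * z)) →
      ((List.finRange r).map (fun i => (w ^ (t i * u i) * X i * z ^ u i) ^ a i)).prod =
        w ^ (2 * (∑ i, ∑ j, if i < j then a i * a j * t j * u i else 0) +
              ∑ i, a i ^ 2 * t i * u i) *
          (((List.finRange r).map (fun i => X i ^ a i)).prod * z ^ (∑ i, a i * u i)) := by
  intro r
  induction r with
  | zero => intro X t a u hz; simp
  | succ r ih =>
    intro X t a u hz
    have IH := ih (fun i => X i.succ) (fun i => t i.succ) (fun i => a i.succ)
      (fun i => u i.succ) (fun j => hz j.succ)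
    have hzu : z ^ u 0 * X 0 = w ^ (2 * (t 0 * u 0)) * (X 0 * z ^ u 0) := by
      have h2 := aux2 w z (X 0) hw (2 * t 0) (hz 0) (u 0) 1
      simpa only [zpow_one, mul_one,
        show (2 * t 0 * u 0 : ℤ) = 2 * (t 0 * u 0) from by ring] using h2
    have hhead := aux3 w (z ^ u 0) (X 0) hw (t 0 * u 0) hzu (a 0)
    have h4 : z ^ (u 0 * a 0) * ((List.finRange r).map (fun i => X i.succ ^ a i.succ)).prod =
        w ^ (((List.finRange r).map (fun i => 2 * t i.succ * (u 0 * a 0) * a i.succ)).sum) *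
          (((List.finRange r).map (fun i => X i.succ ^ a i.succ)).prod * z ^ (u 0 * a 0)) := by
      have h5 := aux4 w (z ^ (u 0 * a 0)) hw
        ((List.finRange r).map (fun i => (X i.succ ^ a i.succ,
          2 * t i.succ * (u 0 * a 0) * a i.succ)))
        (by
          intro p hp
          simp only [List.mem_map, List.mem_finRange, true_and] at hp
          obtain ⟨i, rfl⟩ := hp
          exact aux2 w z (X i.succ) hw (2 * t i.succ) (hz i.succ) (u 0 * a 0) (a i.succ))
      simpa only [List.map_map, Function.comp_def] using h5
    simp only [List.finRange_succ, List.map_cons, List.prod_cons, List.map_map,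
      Function.comp_def]
    rw [hhead, IH, ← zpow_mul z (u 0) (a 0)]
    simp only [mul_assoc]
    rw [move hw _ (z ^ (u 0 * a 0)), nest h4, ← zpow_add,
      move hw _ (X 0 ^ a 0), move hw _ (X 0 ^ a 0),
      ← mul_assoc, ← zpow_add, ← mul_assoc, ← zpow_add]
    congr 1
    · rw [← Fin.sum_univ_def]
      have hD : (∑ i : Fin r, 2 * t i.succ * (u 0 * a 0) * a i.succ) =
          2 * ∑ i : Fin r, a 0 * a i.succ * t i.succ * u 0 := by
        rw [Finset.mul_sum]; exact Finset.sum_congr rfl fun i _ => by ring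
      rw [hD]
      simp only [Fin.sum_univ_succ, Fin.succ_pos, if_true, Fin.not_lt_zero, if_false,
        Fin.succ_lt_succ_iff, lt_irrefl, zero_add]
      ring
    · congr 1
      congr 1
      congr 1
      simp only [Fin.sum_univ_succ]
      ring
end


/-- With `z X j = q^(t j) X j z`, `q = v²`, and
`X̃ i = v^(t i * u i) X i z^(u i)`, the ordered product of the `X̃ i ^ a i` equals
`q^(Σ_{i<j} a i a j t j u i) · v^(Σ_i a i² t i u i) · X 1^(a 1) ⋯ X r^(a r) · z^(Σ_i a i u i)`. -/
theorem rescaled_product_formula (K : Type*) [Field K] (A : Type*) [Ring A] [Algebra K A]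
    (v : K) (hv : v ≠ 0) (r : ℕ)
    (X : Fin r → Aˣ) (z : Aˣ) (t : Fin r → ℤ)
    (hz : ∀ j, (z : A) * (X j : A) = algebraMap K A ((v ^ 2) ^ t j) * ((X j : A) * (z : A)))
    (a u : Fin r → ℤ)
    (Xt : Fin r → Aˣ)
    (hXt : ∀ i, Xt i =
      Units.map (algebraMap K A).toMonoidHom (Units.mk0 v hv ^ (t i * u i)) * X i * z ^ u i) :
    ((List.finRange r).map (fun i => ((Xt i ^ a i : Aˣ) : A))).prod =
      algebraMap K A ((v ^ 2) ^ (∑ i, ∑ j, if i < j then a i * a j * t j * u i else 0) *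
          v ^ (∑ i, a i ^ 2 * t i * u i)) *
        (((List.finRange r).map (fun i => ((X i ^ a i : Aˣ) : A))).prod *
          ((z ^ (∑ i, a i * u i) : Aˣ) : A)) := by
  set w : Aˣ := Units.map (algebraMap K A).toMonoidHom (Units.mk0 v hv) with hwdef
  have hwpow : ∀ n : ℤ, ((w ^ n : Aˣ) : A) = algebraMap K A (v ^ n) := by
    intro n
    rw [hwdef, ← map_zpow, Units.coe_map]
    simp [Units.val_zpow_eq_zpow_val]
  have hwcoe : (w : A) = algebraMap K A v := by simp [hwdef]
  have hv2 : ∀ T : ℤ, ((v ^ 2) ^ T : K) = v ^ (2 * T) := by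
    intro T
    rw [← zpow_natCast v 2, ← zpow_mul]
    norm_num
  have hw : ∀ g : Aˣ, Commute w g := by
    intro g
    apply Units.ext
    rw [Units.val_mul, Units.val_mul, hwcoe, Algebra.commutes]
  have hzu : ∀ j, z * X j = w ^ (2 * t j) * (X j * z) := by
    intro j
    apply Units.ext
    simp only [Units.val_mul]
    rw [hwpow, ← hv2]
    exact hz j
  have hXt' : ∀ i, Xt i = w ^ (t i * u i) * X i * z ^ u i := by
    intro i
    rw [hXt i, map_zpow]
  have E := grp w z hw r X t a u hzu
  simp only [← hXt'] at E
  have hcoe : ∀ (f : Fin r → Aˣ),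
      ((List.finRange r).map (fun i => ((f i : Aˣ) : A))).prod =
        ((((List.finRange r).map f).prod : Aˣ) : A) := by
    intro f
    have h := map_list_prod (Units.coeHom A) ((List.finRange r).map f)
    simpa [List.map_map, Function.comp_def] using h.symm
  rw [hcoe (fun i => Xt i ^ a i), hcoe (fun i => X i ^ a i), E,
    Units.val_mul, Units.val_mul, hwpow]
  congr 1
  rw [hv2, ← zpow_add₀ hv]
end

section
/- In the quantum torus setting with extending unit z, set X̃_i = v^{t_i u_i} X_i z^{u_i}, L̃ = L − t∧u, and M̃(a) = v^{Σ_{i<j} a_i a_j L̃_{ji}} · X̃_1^{a_1} ⋯ X̃_r^{a_r}. Then for every integer vector a = (a_1,…,a_r), M̃(a) = v^{(a·t)(a·u)} · M(a) · z^{a·u}, where a·t = Σ_i a_i t_i and a·u = Σ_i a_i u_i; equivalently M̃(a) = v^{Σ_i Σ_j a_i a_j t_i u_j} M(a) z^{Σ_i a_i u_i}. -/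
section GroupLemmas
variable {G : Type*} [Group G]

lemma my_aux1 (w x y : G) (hw : ∀ g : G, Commute w g)
    (h : x * y = w * (y * x)) : ∀ m : ℤ, x ^ m * y = w ^ m * (y * x ^ m) := by
  have hcw : ∀ (g h : G), g * (w * h) = w * (g * h) := by
    intro g h; rw [← mul_assoc, ← (hw g).eq, mul_assoc]
  have hcw' : ∀ (g h : G), g * (w⁻¹ * h) = w⁻¹ * (g * h) := by
    intro g h; rw [← mul_assoc, ← ((hw g).inv_left).eq, mul_assoc]
  have hinv : x⁻¹ * y = w⁻¹ * (y * x⁻¹) := by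
    apply mul_left_cancel (a := x)
    calc x * (x⁻¹ * y) = y := by group
    _ = w⁻¹ * ((x * y) * x⁻¹) := by rw [h]; group
    _ = w⁻¹ * (x * (y * x⁻¹)) := by group
    _ = x * (w⁻¹ * (y * x⁻¹)) := by rw [hcw']
  intro m
  induction m using Int.induction_on with
  | zero => simp
  | succ n ih =>
    calc x ^ ((n : ℤ) + 1) * y = x ^ (n : ℤ) * (x * y) := by rw [zpow_add_one]; group
    _ = x ^ (n : ℤ) * (w * (y * x)) := by rw [h]
    _ = w * (x ^ (n : ℤ) * y * x) := by rw [hcw]; group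
    _ = w * ((w ^ (n : ℤ) * (y * x ^ (n : ℤ))) * x) := by rw [ih]
    _ = w ^ ((n : ℤ) + 1) * (y * x ^ ((n : ℤ) + 1)) := by
        rw [zpow_add_one, zpow_add_one, ← (hw (w ^ (n : ℤ))).eq]; group
  | pred n ih =>
    calc x ^ (-(n : ℤ) - 1) * y = x ^ (-(n : ℤ)) * (x⁻¹ * y) := by rw [zpow_sub_one]; group
    _ = x ^ (-(n : ℤ)) * (w⁻¹ * (y * x⁻¹)) := by rw [hinv]
    _ = w⁻¹ * (x ^ (-(n : ℤ)) * y * x⁻¹) := by rw [hcw']; group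
    _ = w⁻¹ * ((w ^ (-(n : ℤ)) * (y * x ^ (-(n : ℤ)))) * x⁻¹) := by rw [ih]
    _ = w ^ (-(n : ℤ) - 1) * (y * x ^ (-(n : ℤ) - 1)) := by
        rw [zpow_sub_one, zpow_sub_one, ← ((hw (w ^ (-(n : ℤ)))).inv_left).eq]; group

lemma my_zpow_comm (w x y : G) (hw : ∀ g : G, Commute w g)
    (h : x * y = w * (y * x)) (m n : ℤ) :
    x ^ m * y ^ n = w ^ (m * n) * (y ^ n * x ^ m) := by
  have h1 : y * x ^ m = (w ^ m)⁻¹ * (x ^ m * y) := by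
    rw [my_aux1 w x y hw h m]; group
  have h2 := my_aux1 (w ^ m)⁻¹ y (x ^ m)
    (fun g => ((hw g).zpow_left m).inv_left) h1 n
  rw [h2]; group


lemma central_zpow_mul (w : G) (hw : ∀ g : G, Commute w g) (k : ℤ) (g h' : G) :
    g * (w ^ k * h') = w ^ k * (g * h') := by
  rw [← mul_assoc, ((hw g).symm.zpow_right k).eq, mul_assoc]

/-- power of a product `(a*b)^n` when `b*a = w^2 * (a*b)` with central `w`. -/
lemma my_prod_pow (w a b : G) (hw : ∀ g : G, Commute w g)
    (h : b * a = w ^ (2 : ℤ) * (a * b)) (n : ℤ) :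
    (a * b) ^ n = w ^ (n * (n - 1)) * (a ^ n * b ^ n) := by
  have key : ∀ (m k : ℤ), b ^ m * a ^ k = w ^ (2 * (m * k)) * (a ^ k * b ^ m) := by
    intro m k
    have := my_zpow_comm (w ^ (2 : ℤ)) b a (fun g => (hw g).zpow_left 2) h m k
    rw [this, ← zpow_mul, mul_comm (2 : ℤ)]
  induction n using Int.induction_on with
  | zero => simp
  | succ n ih =>
    have hba : b ^ (n : ℤ) * a = w ^ (2 * (n : ℤ)) * (a * b ^ (n : ℤ)) := by
      have := key (n : ℤ) 1; simpa using this
    calc (a * b) ^ ((n : ℤ) + 1) = (a * b) ^ (n : ℤ) * (a * b) := by rw [zpow_add_one]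
    _ = w ^ ((n : ℤ) * ((n : ℤ) - 1)) * (a ^ (n : ℤ) * ((b ^ (n : ℤ) * a) * b)) := by
        rw [ih]; group
    _ = w ^ ((n : ℤ) * ((n : ℤ) - 1)) * (a ^ (n : ℤ) * ((w ^ (2 * (n : ℤ)) * (a * b ^ (n : ℤ))) * b)) := by
        rw [hba]
    _ = w ^ ((n : ℤ) * ((n : ℤ) - 1)) * (w ^ (2 * (n : ℤ)) * (a ^ (n : ℤ) * ((a * b ^ (n : ℤ)) * b))) := by
        rw [mul_assoc (w ^ (2 * (n : ℤ))), central_zpow_mul w hw]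
    _ = w ^ ((n : ℤ) * ((n : ℤ) - 1) + 2 * (n : ℤ)) * (a ^ (n : ℤ) * ((a * b ^ (n : ℤ)) * b)) := by
        rw [← mul_assoc, ← zpow_add]
    _ = w ^ (((n : ℤ) + 1) * (((n : ℤ) + 1) - 1)) * (a ^ ((n : ℤ) + 1) * b ^ ((n : ℤ) + 1)) := by
        rw [show (n : ℤ) * ((n : ℤ) - 1) + 2 * (n : ℤ) = ((n : ℤ) + 1) * (((n : ℤ) + 1) - 1) from by ring]
        group
  | pred n ih =>
    have hba : b ^ (-(n : ℤ) - 1) * a⁻¹ = w ^ (2 * ((-(n : ℤ) - 1) * (-1))) * (a⁻¹ * b ^ (-(n : ℤ) - 1)) := by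
      have := key (-(n : ℤ) - 1) (-1)
      rw [zpow_neg_one] at this
      exact this
    calc (a * b) ^ (-(n : ℤ) - 1) = (a * b) ^ (-(n : ℤ)) * (b⁻¹ * a⁻¹) := by rw [zpow_sub_one, mul_inv_rev]
    _ = w ^ ((-(n : ℤ)) * ((-(n : ℤ)) - 1)) * (a ^ (-(n : ℤ)) * (b ^ (-(n : ℤ) - 1) * a⁻¹)) := by
        rw [ih, zpow_sub_one b]; group
    _ = w ^ ((-(n : ℤ)) * ((-(n : ℤ)) - 1)) * (a ^ (-(n : ℤ)) * (w ^ (2 * ((-(n : ℤ) - 1) * (-1))) * (a⁻¹ * b ^ (-(n : ℤ) - 1)))) := by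
        rw [hba]
    _ = w ^ ((-(n : ℤ)) * ((-(n : ℤ)) - 1) + 2 * ((-(n : ℤ) - 1) * (-1))) * (a ^ (-(n : ℤ)) * (a⁻¹ * b ^ (-(n : ℤ) - 1))) := by
        rw [central_zpow_mul w hw, ← mul_assoc, ← zpow_add]
    _ = w ^ ((-(n : ℤ) - 1) * ((-(n : ℤ) - 1) - 1)) * (a ^ (-(n : ℤ) - 1) * b ^ (-(n : ℤ) - 1)) := by
        rw [show (-(n : ℤ)) * ((-(n : ℤ)) - 1) + 2 * ((-(n : ℤ) - 1) * (-1)) = (-(n : ℤ) - 1) * ((-(n : ℤ) - 1) - 1) from by ring]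
        group

/-- pull central powers out of a list product -/
lemma my_prod_central {ι : Type*} (w : G) (hw : ∀ g : G, Commute w g)
    (e : ι → ℤ) (f : ι → G) :
    ∀ l : List ι, (l.map (fun i => w ^ e i * f i)).prod
      = w ^ ((l.map e).sum) * (l.map f).prod := by
  intro l
  induction l with
  | nil => simp
  | cons i l ih =>
    simp only [List.map_cons, List.prod_cons, List.sum_cons, ih]
    rw [mul_assoc, central_zpow_mul w hw]; group

/-- move powers of `zz` to the right through a product -/
lemma my_z_past_prod {ι : Type*} (w zz : G) (hw : ∀ g : G, Commute w g)
    (f : ι → G) (c : ι → ℤ)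
    (hzf : ∀ (i : ι) (k : ℤ), zz ^ k * f i = w ^ (k * c i) * (f i * zz ^ k)) (k : ℤ) :
    ∀ l : List ι, zz ^ k * (l.map f).prod
      = w ^ (k * (l.map c).sum) * ((l.map f).prod * zz ^ k) := by
  intro l
  induction l with
  | nil => simp
  | cons i l ih =>
    simp only [List.map_cons, List.prod_cons, List.sum_cons]
    calc zz ^ k * (f i * (l.map f).prod) = (zz ^ k * f i) * (l.map f).prod := by group
    _ = (w ^ (k * c i) * (f i * zz ^ k)) * (l.map f).prod := by rw [hzf]
    _ = w ^ (k * c i) * (f i * (zz ^ k * (l.map f).prod)) := by group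
    _ = w ^ (k * c i) * (f i * (w ^ (k * (l.map c).sum) * ((l.map f).prod * zz ^ k))) := by rw [ih]
    _ = w ^ (k * c i) * (w ^ (k * (l.map c).sum) * (f i * ((l.map f).prod * zz ^ k))) := by
        rw [central_zpow_mul w hw]
    _ = w ^ (k * (c i + (l.map c).sum)) * ((f i * (l.map f).prod) * zz ^ k) := by
        rw [show k * (c i + (l.map c).sum) = k * c i + k * (l.map c).sum from by ring,
          zpow_add]
        group

/-- the correction exponent accumulated when moving all the `z` powers to the right -/
def myGsum {ι : Type*} (f g : ι → ℤ) : List ι → ℤ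
  | [] => 0
  | i :: l => f i * (l.map g).sum + myGsum f g l

lemma my_main_prod {ι : Type*} (w zz : G) (hw : ∀ g : G, Commute w g)
    (f : ι → G) (m c : ι → ℤ)
    (hzf : ∀ (i : ι) (k : ℤ), zz ^ k * f i = w ^ (k * c i) * (f i * zz ^ k)) :
    ∀ l : List ι, (l.map (fun i => f i * zz ^ m i)).prod
      = w ^ (myGsum m c l) * ((l.map f).prod * zz ^ ((l.map m).sum)) := by
  intro l
  induction l with
  | nil => simp [myGsum]
  | cons i l ih =>
    simp only [List.map_cons, List.prod_cons, List.sum_cons, myGsum]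
    calc (f i * zz ^ m i) * (l.map (fun i => f i * zz ^ m i)).prod
        = (f i * zz ^ m i) * (w ^ (myGsum m c l) * ((l.map f).prod * zz ^ ((l.map m).sum))) := by
          rw [ih]
    _ = w ^ (myGsum m c l) * (f i * ((zz ^ m i * (l.map f).prod) * zz ^ ((l.map m).sum))) := by
        rw [central_zpow_mul w hw]; group
    _ = w ^ (myGsum m c l) * (f i * ((w ^ (m i * (l.map c).sum) * ((l.map f).prod * zz ^ m i)) * zz ^ ((l.map m).sum))) := by
        rw [my_z_past_prod w zz hw f c hzf (m i) l]
    _ = w ^ (myGsum m c l) * (w ^ (m i * (l.map c).sum) * ((f i * (l.map f).prod) * (zz ^ m i * zz ^ ((l.map m).sum)))) := by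
        rw [mul_assoc (w ^ (m i * (l.map c).sum)), central_zpow_mul w hw]; group
    _ = w ^ (m i * (l.map c).sum + myGsum m c l) * ((f i * (l.map f).prod) * zz ^ (m i + (l.map m).sum)) := by
        rw [zpow_add w, zpow_add zz]; group

lemma myGsum_pairwise {ι : Type*} [LinearOrder ι] (f g : ι → ℤ) :
    ∀ l : List ι, l.Pairwise (· < ·) →
      myGsum f g l
        = (l.map (fun i => (l.map (fun j => if i < j then f i * g j else 0)).sum)).sum := by
  intro l hl
  induction l with
  | nil => simp [myGsum]
  | cons i l ih =>
    rw [List.pairwise_cons] at hl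
    obtain ⟨h1, h2⟩ := hl
    have e1 : ((i :: l).map (fun j => if i < j then f i * g j else 0)).sum
        = f i * (l.map g).sum := by
      rw [List.map_cons, List.sum_cons, if_neg (lt_irrefl i), zero_add,
        List.map_congr_left (fun j hj => if_pos (h1 j hj))]
      exact List.sum_map_mul_left l g (f i)
    have e2 : ∀ p ∈ l, ((i :: l).map (fun j => if p < j then f p * g j else 0)).sum
        = (l.map (fun j => if p < j then f p * g j else 0)).sum := by
      intro p hp
      rw [List.map_cons, List.sum_cons,
        if_neg (fun hpi => absurd (h1 p hp) (not_lt_of_gt hpi)), zero_add]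
    calc myGsum f g (i :: l) = f i * (l.map g).sum + myGsum f g l := rfl
    _ = ((i :: l).map (fun j => if i < j then f i * g j else 0)).sum
        + (l.map (fun p => ((i :: l).map (fun j => if p < j then f p * g j else 0)).sum)).sum := by
        rw [e1, ih h2, List.map_congr_left (fun p hp => (e2 p hp).symm)]
    _ = ((i :: l).map (fun p => ((i :: l).map (fun j => if p < j then f p * g j else 0)).sum)).sum := by
        simp [List.map_cons, List.sum_cons, lt_irrefl]

end GroupLemmas

lemma my_tri (r : ℕ) (F : Fin r → Fin r → ℤ) :
    (∑ i, ∑ j, F i j)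
      = ((∑ i, ∑ j, if i < j then F i j + F j i else 0) + ∑ i, F i i) := by
  have each : ∀ i j : Fin r, F i j
      = ((if i < j then F i j else 0) + (if j < i then F i j else 0))
        + (if i = j then F i j else 0) := by
    intro i j
    rcases lt_trichotomy i j with h | h | h
    · simp [h, asymm h, ne_of_lt h]
    · simp [h, lt_irrefl]
    · simp [h, asymm h, (ne_of_lt h).symm, not_lt_of_gt h]
  calc (∑ i, ∑ j, F i j)
      = ∑ i, ∑ j, (((if i < j then F i j else 0) + (if j < i then F i j else 0))
          + (if i = j then F i j else 0)) := by
        exact Finset.sum_congr rfl fun i _ => Finset.sum_congr rfl fun j _ => each i j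
  _ = ((∑ i, ∑ j, if i < j then F i j else 0) + (∑ i, ∑ j, if j < i then F i j else 0))
        + (∑ i, ∑ j, if i = j then F i j else 0) := by
      simp only [Finset.sum_add_distrib]
  _ = ((∑ i, ∑ j, if i < j then F i j else 0) + (∑ i, ∑ j, if i < j then F j i else 0))
        + (∑ i, F i i) := by
      congr 1
      · congr 1
        exact Finset.sum_comm
      · refine Finset.sum_congr rfl fun i _ => ?_
        simp [Finset.sum_ite_eq]
  _ = ((∑ i, ∑ j, if i < j then F i j + F j i else 0) + ∑ i, F i i) := by
      congr 1
      rw [← Finset.sum_add_distrib]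
      refine Finset.sum_congr rfl fun i _ => ?_
      rw [← Finset.sum_add_distrib]
      refine Finset.sum_congr rfl fun j _ => ?_
      by_cases h : i < j <;> simp [h]

lemma my_scalar (r : ℕ) (a t u : Fin r → ℤ) (L Lt : Matrix (Fin r) (Fin r) ℤ)
    (hLt : ∀ i j, Lt i j = L i j - (t i * u j - t j * u i)) :
    (∑ i, ∑ j, if i < j then a i * a j * Lt j i else 0)
      + ((∑ i, t i * u i * (a i * a i))
      + (∑ i, ∑ j, if i < j then (u i * a i) * (2 * (t j * a j)) else 0))
    = (∑ i, a i * t i) * (∑ i, a i * u i)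
      + (∑ i, ∑ j, if i < j then a i * a j * L j i else 0) := by
  rw [Finset.sum_mul_sum, my_tri r (fun i j => (a i * t i) * (a j * u j))]
  have hdiag : (∑ i, t i * u i * (a i * a i)) = ∑ i, (a i * t i) * (a i * u i) :=
    Finset.sum_congr rfl (fun i _ => by ring)
  have hoff : (∑ i, ∑ j, if i < j then a i * a j * Lt j i else 0)
      + (∑ i, ∑ j, if i < j then (u i * a i) * (2 * (t j * a j)) else 0)
      = (∑ i, ∑ j, if i < j then (a i * t i) * (a j * u j) + (a j * t j) * (a i * u i) else 0)
      + (∑ i, ∑ j, if i < j then a i * a j * L j i else 0) := by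
    rw [← Finset.sum_add_distrib, ← Finset.sum_add_distrib]
    refine Finset.sum_congr rfl fun i _ => ?_
    rw [← Finset.sum_add_distrib, ← Finset.sum_add_distrib]
    refine Finset.sum_congr rfl fun j _ => ?_
    by_cases h : i < j
    · simp only [if_pos h]
      rw [hLt j i]
      ring
    · simp [h]
  linear_combination hdiag + hoff



/-- In the quantum torus setting with extending unit `z`, setting
`X̃ i = v^(t i * u i) X i z^(u i)` and `L̃ = L - t∧u`, the rescaled exchange monomials
satisfy `M̃(a) = v^((a·t)(a·u)) M(a) z^(a·u)` for every integer vector `a`. -/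
theorem rescaled_exchange_monomial_with_z (K : Type*) [Field K] (A : Type*) [Ring A]
    [Algebra K A] (v : K) (hv : v ≠ 0) (r : ℕ) (hr : 0 < r)
    (L : Matrix (Fin r) (Fin r) ℤ) (hL : L.transpose = -L)
    (X : Fin r → Aˣ)
    (hX : ∀ i j, (X i : A) * (X j : A) =
      algebraMap K A ((v ^ 2) ^ L i j) * ((X j : A) * (X i : A)))
    (t u : Fin r → ℤ) (z : Aˣ)
    (hz : ∀ i, (z : A) * (X i : A) = algebraMap K A ((v ^ 2) ^ t i) * ((X i : A) * (z : A)))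
    (Xt : Fin r → Aˣ)
    (hXt : ∀ i, Xt i =
      Units.map (algebraMap K A).toMonoidHom (Units.mk0 v hv ^ (t i * u i)) * X i * z ^ u i)
    (Lt : Matrix (Fin r) (Fin r) ℤ)
    (hLt : ∀ i j, Lt i j = L i j - (t i * u j - t j * u i))
    (M Mt : (Fin r → ℤ) → A)
    (hM : ∀ a, M a =
      algebraMap K A (v ^ (∑ i, ∑ j, if i < j then a i * a j * L j i else 0)) *
        ((List.finRange r).map (fun i => ((X i ^ a i : Aˣ) : A))).prod)
    (hMt : ∀ a, Mt a =
      algebraMap K A (v ^ (∑ i, ∑ j, if i < j then a i * a j * Lt j i else 0)) *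
        ((List.finRange r).map (fun i => ((Xt i ^ a i : Aˣ) : A))).prod) :
    ∀ a : Fin r → ℤ, Mt a =
      algebraMap K A (v ^ ((∑ i, a i * t i) * (∑ i, a i * u i))) *
        (M a * ((z ^ (∑ i, a i * u i) : Aˣ) : A)) := by
  intro a
  set l := List.finRange r with hl
  set V : Kˣ := Units.mk0 v hv with hV
  set W : Aˣ := Units.map (algebraMap K A).toMonoidHom V with hW
  have hWcoe : ∀ k : ℤ, ((W ^ k : Aˣ) : A) = algebraMap K A (v ^ k) := by
    intro k
    rw [hW, ← map_zpow, Units.coe_map, hV, Units.val_zpow_eq_zpow_val, Units.val_mk0]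
    rfl
  have hWcen : ∀ g : Aˣ, Commute W g := by
    intro g
    apply Units.ext
    have : (W : A) = algebraMap K A v := by
      have := hWcoe 1
      simpa using this
    show ((W * g : Aˣ) : A) = ((g * W : Aˣ) : A)
    rw [Units.val_mul, Units.val_mul, this, Algebra.commutes]
  have hpow2 : ∀ k : ℤ, ((v ^ 2) ^ k) = v ^ (2 * k) := by
    intro k
    rw [← zpow_natCast v 2, ← zpow_mul]
    norm_num
  have hzU : ∀ i, z * X i = W ^ (2 * t i) * (X i * z) := by
    intro i
    apply Units.ext
    show ((z * X i : Aˣ) : A) = ((W ^ (2 * t i) * (X i * z) : Aˣ) : A)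
    rw [Units.val_mul, Units.val_mul, Units.val_mul, hWcoe, ← hpow2]
    exact hz i
  have hzf : ∀ (i : Fin r) (k : ℤ),
      z ^ k * (X i ^ a i) = W ^ (k * (2 * (t i * a i))) * ((X i ^ a i) * z ^ k) := by
    intro i k
    have := my_zpow_comm (W ^ (2 * t i)) z (X i)
      (fun g => (hWcen g).zpow_left (2 * t i)) (hzU i) k (a i)
    rw [this, ← zpow_mul, show 2 * t i * (k * a i) = k * (2 * (t i * a i)) from by ring]
  have hXtU : ∀ i, Xt i = W ^ (t i * u i) * (X i * z ^ u i) := by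
    intro i
    rw [hXt i, hW, hV, map_zpow, mul_assoc]
  have hXtpow : ∀ (i : Fin r) (n : ℤ),
      Xt i ^ n = W ^ (t i * u i * (n * n)) * (X i ^ n * z ^ (u i * n)) := by
    intro i n
    have hzx : z ^ u i * X i = (W ^ (t i * u i)) ^ (2 : ℤ) * (X i * z ^ u i) := by
      have := my_zpow_comm (W ^ (2 * t i)) z (X i)
        (fun g => (hWcen g).zpow_left (2 * t i)) (hzU i) (u i) 1
      simp only [zpow_one, mul_one] at this
      rw [this, ← zpow_mul, ← zpow_mul,
        show 2 * t i * u i = t i * u i * 2 from by ring]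
    have hY := my_prod_pow (W ^ (t i * u i)) (X i) (z ^ u i)
      (fun g => (hWcen g).zpow_left (t i * u i)) hzx n
    rw [hXtU i, Commute.mul_zpow (((hWcen _).zpow_left (t i * u i))) n, hY,
      ← zpow_mul, ← zpow_mul, ← mul_assoc, ← zpow_add,
      show t i * u i * n + t i * u i * (n * (n - 1)) = t i * u i * (n * n) from by ring,
      ← zpow_mul]
  -- the main computation, at the level of units
  have hPt : (l.map (fun i => Xt i ^ a i)).prod
      = W ^ ((l.map (fun i => t i * u i * (a i * a i))).sum)
        * ((l.map (fun i => X i ^ a i * z ^ (u i * a i))).prod) := by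
    rw [List.map_congr_left (fun i (_ : i ∈ l) => hXtpow i (a i))]
    exact my_prod_central W hWcen _ _ l
  have hmain := my_main_prod W z hWcen (fun i => X i ^ a i)
    (fun i => u i * a i) (fun i => 2 * (t i * a i)) hzf l
  -- identify the exponents
  have hGsum : myGsum (fun i => u i * a i) (fun i => 2 * (t i * a i)) l
      = ∑ i, ∑ j, if i < j then (u i * a i) * (2 * (t j * a j)) else 0 := by
    rw [myGsum_pairwise _ _ l (hl ▸ List.pairwise_lt_finRange r)]
    rw [Fin.sum_univ_def]
    refine congrArg List.sum (List.map_congr_left fun i _ => ?_)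
    rw [Fin.sum_univ_def]
  have hE1 : (l.map (fun i => t i * u i * (a i * a i))).sum
      = ∑ i, t i * u i * (a i * a i) := (Fin.sum_univ_def _).symm
  have hsz : ((l.map (fun i => u i * a i)).sum) = ∑ i, a i * u i := by
    rw [Fin.sum_univ_def]
    exact congrArg List.sum (List.map_congr_left fun i _ => mul_comm (u i) (a i))
  have key : (W ^ (∑ i, ∑ j, if i < j then a i * a j * Lt j i else 0))
      * (l.map (fun i => Xt i ^ a i)).prod
      = W ^ ((∑ i, a i * t i) * (∑ i, a i * u i))
        * ((W ^ (∑ i, ∑ j, if i < j then a i * a j * L j i else 0)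
            * (l.map (fun i => X i ^ a i)).prod) * z ^ (∑ i, a i * u i)) := by
    rw [hPt, hmain, hE1, hGsum, hsz]
    rw [← mul_assoc (W ^ _), ← zpow_add, ← mul_assoc (W ^ _), ← zpow_add,
      add_assoc, my_scalar r a t u L Lt hLt, zpow_add]
    group
  -- descend to `A`
  have hcoe : ∀ (f : Fin r → Aˣ),
      (l.map (fun i => ((f i : Aˣ) : A))).prod = (((l.map f).prod : Aˣ) : A) := by
    intro f
    have h := map_list_prod (Units.coeHom A) (l.map f)
    rw [List.map_map] at h
    exact h.symm
  rw [hMt a, hM a, ← hWcoe, ← hWcoe, ← hWcoe, hcoe, hcoe,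
    ← Units.val_mul, ← Units.val_mul, ← Units.val_mul, ← Units.val_mul]
  exact congrArg Units.val key
end

section
/- In the quantum torus setting with extending unit z, let B be a skew-symmetric r×r integer matrix and k ∈ {1,…,r} an index such that B_k t = 0 and B_k u = 0, where B_k is the k-th row of B. Set X̃_i = v^{t_i u_i} X_i z^{u_i}, L̃ = L − t∧u, and let M̃ denote the exchange monomial built from the X̃_i with the matrix L̃. Then M̃(b_k^+) + M̃(b_k^−) = v^{t'_k u'_k} · ( M(b_k^+) + M(b_k^−) ) · z^{u'_k}, where t'_k = b_k^+ · t = b_k^− · t and u'_k = b_k^+ · u = b_k^− · u; that is, mutation of a re-scaled seed in direction k produces the re-scaling (by the mutated gradings) of the mutated variable. -/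
lemma contE {G : Type*} [Group G] {A B C D E : G} (e : A * B = C * (D * E)) (h : G) :
    A * (B * h) = C * (D * (E * h)) := by
  rw [← mul_assoc, e, mul_assoc, mul_assoc]

lemma contM {G : Type*} [Group G] {A B C : G} (e : A * B = C) (h : G) :
    A * (B * h) = C * h := by rw [← mul_assoc, e]

lemma contSwap {G : Type*} [Group G] {A B : G} (e : A * B = B * A) (h : G) :
    A * (B * h) = B * (A * h) := by rw [← mul_assoc, e, mul_assoc]

lemma qc_central {G : Type*} [Group G] {c x y : G} (hc : ∀ g, c * g = g * c)
    (h : x * y = c * (y * x)) (m n : ℤ) :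
    x ^ m * y ^ n = c ^ (m * n) * (y ^ n * x ^ m) := by
  have hC : ∀ g : G, Commute c g := fun g => hc g
  have h1 : SemiconjBy x y (c * y) := by
    show x * y = c * y * x
    rw [h, mul_assoc]
  have h2 := h1.zpow_right n
  rw [(hC y).mul_zpow] at h2
  have h2' : x * y ^ n = c ^ n * (y ^ n * x) := by rw [h2.eq, mul_assoc]
  have h3 : SemiconjBy (y ^ n) x (c ^ (-n) * x) := by
    show y ^ n * x = c ^ (-n) * x * y ^ n
    rw [mul_assoc, h2', ← mul_assoc, ← zpow_add, neg_add_cancel, zpow_zero, one_mul]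
  have h4 := h3.zpow_right m
  rw [(((hC x).zpow_left (-n))).mul_zpow] at h4
  have h4' : y ^ n * x ^ m = c ^ (-(m * n)) * (x ^ m * y ^ n) := by
    rw [h4.eq, ← zpow_mul, mul_assoc]
    congr 2
    ring
  rw [h4', ← mul_assoc, ← zpow_add, add_neg_cancel, zpow_zero, one_mul]

lemma qc_mul_zpow {G : Type*} [Group G] {d x y : G} (hd : ∀ g, d * g = g * d)
    (h : y * x = d * d * (x * y)) (m : ℤ) :
    (x * y) ^ m = d ^ (m * (m - 1)) * (x ^ m * y ^ m) := by
  have hdd : ∀ g, (d * d) * g = g * (d * d) := fun g => by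
    rw [mul_assoc, hd g, ← mul_assoc, hd g, mul_assoc]
  have h' : y * x = (d * d) * (x * y) := h
  have key : ∀ p : ℤ, y ^ p * x = (d * d) ^ p * (x * y ^ p) := by
    intro p
    have := qc_central hdd h' p 1
    simpa using this
  have keyinv : ∀ p : ℤ, y ^ p * x⁻¹ = (d * d) ^ (-p) * (x⁻¹ * y ^ p) := by
    intro p
    have := qc_central hdd h' p (-1)
    simpa using this
  have hddp : ∀ p : ℤ, (d * d) ^ p = d ^ (2 * p) := by
    intro p
    rw [show d * d = d ^ (2:ℤ) by rw [show (2:ℤ) = 1 + 1 from rfl, zpow_add, zpow_one],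
      ← zpow_mul]
  have hdC : ∀ g : G, Commute d g := fun g => hd g
  have hmove : ∀ (p : ℤ) (g h0 : G), g * (d ^ p * h0) = d ^ p * (g * h0) :=
    fun p g h0 => contSwap ((hdC g).zpow_left p).eq.symm h0
  have ωmerge : ∀ (p q : ℤ) (h0 : G), d ^ p * (d ^ q * h0) = d ^ (p + q) * h0 :=
    fun p q h0 => contM (zpow_add d p q).symm h0
  induction m using Int.induction_on with
  | zero => simp
  | succ n ih =>
    rw [zpow_add_one, ih]
    have step1 : ∀ h0, y ^ (n:ℤ) * (x * h0) = (d*d) ^ (n:ℤ) * (x * (y ^ (n:ℤ) * h0)) :=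
      fun h0 => contE (key (n:ℤ)) h0
    calc d ^ ((n:ℤ) * ((n:ℤ) - 1)) * (x ^ (n:ℤ) * y ^ (n:ℤ)) * (x * y)
        = d ^ ((n:ℤ) * ((n:ℤ) - 1)) * (x ^ (n:ℤ) * (y ^ (n:ℤ) * (x * y))) := by
          simp only [mul_assoc]
      _ = d ^ ((n:ℤ) * ((n:ℤ) - 1)) * (x ^ (n:ℤ) * ((d*d) ^ (n:ℤ) * (x * (y ^ (n:ℤ) * y)))) := by
          rw [step1]
      _ = d ^ ((n:ℤ) * ((n:ℤ) - 1)) * (d ^ (2*(n:ℤ)) * (x ^ (n:ℤ) * (x * (y ^ (n:ℤ) * y)))) := by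
          rw [hddp, hmove]
      _ = d ^ ((n:ℤ) * ((n:ℤ) - 1) + 2*(n:ℤ)) * (x ^ (n:ℤ) * (x * (y ^ (n:ℤ) * y))) := by
          rw [ωmerge]
      _ = d ^ ((n:ℤ) * ((n:ℤ) - 1) + 2*(n:ℤ)) * (x ^ ((n:ℤ)+1) * (y ^ ((n:ℤ)+1))) := by
          rw [contM (zpow_add_one x (n:ℤ)).symm, zpow_add_one y (n:ℤ)]
      _ = d ^ (((n:ℤ)+1) * (((n:ℤ)+1) - 1)) * (x ^ ((n:ℤ)+1) * y ^ ((n:ℤ)+1)) := by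
          rw [show (n:ℤ) * ((n:ℤ) - 1) + 2*(n:ℤ) = ((n:ℤ)+1) * (((n:ℤ)+1) - 1) from by ring]
  | pred n ih =>
    rw [show (-(n:ℤ) - 1) = (-(n:ℤ)) - 1 from rfl, zpow_sub_one, ih, mul_inv_rev]
    calc d ^ ((-(n:ℤ)) * ((-(n:ℤ)) - 1)) * (x ^ (-(n:ℤ)) * y ^ (-(n:ℤ))) * (y⁻¹ * x⁻¹)
        = d ^ ((-(n:ℤ)) * ((-(n:ℤ)) - 1)) * (x ^ (-(n:ℤ)) * (y ^ (-(n:ℤ)) * (y⁻¹ * x⁻¹))) := by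
          simp only [mul_assoc]
      _ = d ^ ((-(n:ℤ)) * ((-(n:ℤ)) - 1)) * (x ^ (-(n:ℤ)) * (y ^ ((-(n:ℤ)) - 1) * x⁻¹)) := by
          rw [contM (zpow_sub_one y (-(n:ℤ))).symm]
      _ = d ^ ((-(n:ℤ)) * ((-(n:ℤ)) - 1)) * (x ^ (-(n:ℤ)) * ((d*d) ^ (-((-(n:ℤ)) - 1)) * (x⁻¹ * y ^ ((-(n:ℤ)) - 1)))) := by
          rw [keyinv]
      _ = d ^ ((-(n:ℤ)) * ((-(n:ℤ)) - 1)) * (d ^ (2 * (-((-(n:ℤ)) - 1))) * (x ^ (-(n:ℤ)) * (x⁻¹ * y ^ ((-(n:ℤ)) - 1)))) := by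
          rw [hddp, hmove]
      _ = d ^ ((-(n:ℤ)) * ((-(n:ℤ)) - 1) + 2 * (-((-(n:ℤ)) - 1))) * (x ^ ((-(n:ℤ)) - 1) * y ^ ((-(n:ℤ)) - 1)) := by
          rw [ωmerge, contM (zpow_sub_one x (-(n:ℤ))).symm]
      _ = d ^ ((-(n:ℤ) - 1) * ((-(n:ℤ) - 1) - 1)) * (x ^ (-(n:ℤ) - 1) * y ^ (-(n:ℤ) - 1)) := by
          rw [show (-(n:ℤ)) * ((-(n:ℤ)) - 1) + 2 * (-((-(n:ℤ)) - 1)) = (-(n:ℤ) - 1) * ((-(n:ℤ) - 1) - 1) from by ring]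


def Eexp {r : ℕ} (t u a : Fin r → ℤ) : List (Fin r) → ℤ
  | [] => 0
  | i :: l => a i * a i * (t i * u i) + 2 * (a i * u i) * ((l.map fun j => a j * t j).sum)
      + Eexp t u a l

lemma Eexp_pairwise {r : ℕ} (t u a : Fin r → ℤ) (l : List (Fin r)) (hp : l.Pairwise (· < ·)) :
    Eexp t u a l = ∑ i ∈ l.toFinset,
      (a i * a i * (t i * u i) +
        ∑ j ∈ l.toFinset, if i < j then 2 * (a i * u i) * (a j * t j) else 0) := by
  induction l with
  | nil => simp [Eexp]
  | cons i l ih =>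
    obtain ⟨h1, h2⟩ := List.pairwise_cons.mp hp
    have hnotin : i ∉ l.toFinset := by
      simp only [List.mem_toFinset]
      intro hmem
      exact lt_irrefl i (h1 i hmem)
    have hnodup : l.Nodup := h2.imp (fun hab => hab.ne)
    rw [List.toFinset_cons, Finset.sum_insert hnotin]
    have inner_i : (∑ j ∈ insert i l.toFinset,
        if i < j then 2 * (a i * u i) * (a j * t j) else 0)
        = 2 * (a i * u i) * ((l.map fun j => a j * t j).sum) := by
      rw [Finset.sum_insert hnotin, if_neg (lt_irrefl i), zero_add,
        Finset.sum_congr rfl (fun j hj => if_pos (h1 j (List.mem_toFinset.mp hj))),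
        ← Finset.mul_sum]
      congr 1
      rw [List.sum_toFinset _ hnodup]
    have inner_rest : ∀ i' ∈ l.toFinset,
        (a i' * a i' * (t i' * u i') + ∑ j ∈ insert i l.toFinset,
          if i' < j then 2 * (a i' * u i') * (a j * t j) else 0)
        = (a i' * a i' * (t i' * u i') + ∑ j ∈ l.toFinset,
          if i' < j then 2 * (a i' * u i') * (a j * t j) else 0) := by
      intro i' hi'
      rw [Finset.sum_insert hnotin,
        if_neg (fun hlt => lt_asymm (h1 i' (List.mem_toFinset.mp hi')) hlt), zero_add]
    rw [inner_i, Finset.sum_congr rfl inner_rest, ← ih h2]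
    show Eexp t u a (i :: l) = _ + Eexp t u a l
    simp [Eexp]

lemma split_sum {r : ℕ} (f : Fin r → Fin r → ℤ) :
    ∑ i, ∑ j, f i j
      = (∑ i, ∑ j, if i < j then f i j + f j i else 0) + ∑ i, f i i := by
  have h1 : ∀ i j : Fin r, f i j = (if i < j then f i j else 0) + (if j < i then f i j else 0)
      + (if i = j then f i j else 0) := by
    intro i j
    rcases lt_trichotomy i j with h | h | h
    · simp [h, asymm h, h.ne]
    · subst h; simp [lt_irrefl]
    · simp [h, asymm h, h.ne']
  calc ∑ i, ∑ j, f i j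
      = ∑ i, ∑ j, ((if i < j then f i j else 0) + (if j < i then f i j else 0)
          + (if i = j then f i j else 0)) := by
        exact Finset.sum_congr rfl fun i _ => Finset.sum_congr rfl fun j _ => h1 i j
    _ = ((∑ i, ∑ j, if i < j then f i j else 0) + (∑ i, ∑ j, if j < i then f i j else 0))
          + ∑ i, ∑ j, if i = j then f i j else 0 := by
        simp only [Finset.sum_add_distrib]
    _ = ((∑ i, ∑ j, if i < j then f i j else 0) + (∑ i, ∑ j, if i < j then f j i else 0))
          + ∑ i, f i i := by
        congr 1
        · congr 1
          rw [Finset.sum_comm]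
        · refine Finset.sum_congr rfl fun i _ => ?_
          rw [Finset.sum_ite_eq]
          simp
    _ = (∑ i, ∑ j, if i < j then f i j + f j i else 0) + ∑ i, f i i := by
        congr 1
        rw [← Finset.sum_add_distrib]
        refine Finset.sum_congr rfl fun i _ => ?_
        rw [← Finset.sum_add_distrib]
        refine Finset.sum_congr rfl fun j _ => ?_
        split_ifs <;> simp

lemma arith {r : ℕ} (t u a : Fin r → ℤ) (L Lt : Matrix (Fin r) (Fin r) ℤ)
    (hLt : ∀ i j, Lt i j = L i j - (t i * u j - t j * u i)) :
    (∑ i, ∑ j, if i < j then a i * a j * Lt j i else 0) + Eexp t u a (List.finRange r)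
      = (∑ i, a i * t i) * (∑ i, a i * u i)
        + (∑ i, ∑ j, if i < j then a i * a j * L j i else 0) := by
  rw [Eexp_pairwise t u a (List.finRange r) (List.pairwise_lt_finRange r),
    List.toFinset_finRange, Finset.sum_mul_sum,
    split_sum (fun i j => (a i * t i) * (a j * u j))]
  rw [Finset.sum_add_distrib]
  have e1 : (∑ i, ∑ j, if i < j then a i * a j * Lt j i else 0)
      + (∑ i, ∑ j, if i < j then 2 * (a i * u i) * (a j * t j) else 0)
      = (∑ i, ∑ j, if i < j then (a i * t i) * (a j * u j) + (a j * t j) * (a i * u i) else 0)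
      + (∑ i, ∑ j, if i < j then a i * a j * L j i else 0) := by
    rw [← Finset.sum_add_distrib, ← Finset.sum_add_distrib]
    refine Finset.sum_congr rfl fun i _ => ?_
    rw [← Finset.sum_add_distrib, ← Finset.sum_add_distrib]
    refine Finset.sum_congr rfl fun j _ => ?_
    split_ifs with h
    · rw [hLt j i]; ring
    · simp
  have e2 : ∑ i, (a i * t i) * (a i * u i) = ∑ i, a i * a i * (t i * u i) :=
    Finset.sum_congr rfl fun i _ => by ring
  omega


section
variable {K : Type*} [Field K] {A : Type*} [Ring A] [Algebra K A]

lemma omega_coe (v : K) (hv : v ≠ 0) (p : ℤ) :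
    ((Units.map (algebraMap K A).toMonoidHom (Units.mk0 v hv) ^ p : Aˣ) : A)
      = algebraMap K A (v ^ p) := by
  rw [← map_zpow (Units.map (algebraMap K A).toMonoidHom) (Units.mk0 v hv) p]
  rw [Units.coe_map]
  rw [Units.val_zpow_eq_zpow_val]
  rfl

lemma omega_central (v : K) (hv : v ≠ 0) (p : ℤ) (g : Aˣ) :
    (Units.map (algebraMap K A).toMonoidHom (Units.mk0 v hv)) ^ p * g
      = g * (Units.map (algebraMap K A).toMonoidHom (Units.mk0 v hv)) ^ p := by
  have h := omega_coe (A := A) v hv p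
  refine Units.ext ?_
  rw [Units.val_mul, Units.val_mul, h]
  exact Algebra.commutes (R := K) (v ^ p) (g : A)
end

lemma mono_rescale {K : Type*} [Field K] {A : Type*} [Ring A] [Algebra K A]
    (v : K) (hv : v ≠ 0) {r : ℕ}
    (X : Fin r → Aˣ) (t u : Fin r → ℤ) (z : Aˣ)
    (hz : ∀ i, (z : A) * (X i : A) = algebraMap K A ((v ^ 2) ^ t i) * ((X i : A) * (z : A)))
    (Xt : Fin r → Aˣ)
    (hXt : ∀ i, Xt i =
      Units.map (algebraMap K A).toMonoidHom (Units.mk0 v hv ^ (t i * u i)) * X i * z ^ u i)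
    (a : Fin r → ℤ) (l : List (Fin r)) :
    (l.map (fun i => Xt i ^ a i)).prod
      = (Units.map (algebraMap K A).toMonoidHom (Units.mk0 v hv)) ^ (Eexp t u a l) *
        ((l.map (fun i => X i ^ a i)).prod * z ^ ((l.map fun i => a i * u i).sum)) := by
  set ω : Aˣ := Units.map (algebraMap K A).toMonoidHom (Units.mk0 v hv) with hω
  have hωcoe : ∀ p : ℤ, ((ω ^ p : Aˣ) : A) = algebraMap K A (v ^ p) := fun p =>
    omega_coe v hv p
  have hcen : ∀ (p : ℤ) (g : Aˣ), ω ^ p * g = g * ω ^ p := fun p g =>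
    omega_central v hv p g
  have ωmove : ∀ (p : ℤ) (g h0 : Aˣ), g * (ω ^ p * h0) = ω ^ p * (g * h0) :=
    fun p g h0 => contSwap (hcen p g).symm h0
  have ωmerge : ∀ (p q : ℤ) (h0 : Aˣ), ω ^ p * (ω ^ q * h0) = ω ^ (p + q) * h0 :=
    fun p q h0 => contM (zpow_add ω p q).symm h0
  have hexp : ∀ c : ℤ, (v ^ 2) ^ c = v ^ (2 * c) := by
    intro c
    rw [← zpow_natCast v 2, ← zpow_mul]
    norm_num
  have hzu : ∀ i, z * X i = ω ^ (2 * t i) * (X i * z) := by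
    intro i
    refine Units.ext ?_
    simp only [Units.val_mul, hωcoe]
    rw [hz i, hexp (t i)]
  have hzX : ∀ i (p q : ℤ), z ^ p * X i ^ q = ω ^ (2 * t i * (p * q)) * (X i ^ q * z ^ p) := by
    intro i p q
    have h0 := qc_central (c := ω ^ (2 * t i)) (fun g => hcen _ g) (hzu i) p q
    rwa [← zpow_mul] at h0
  have hXtpow : ∀ i (m : ℤ),
      Xt i ^ m = ω ^ (m * m * (t i * u i)) * (X i ^ m * z ^ (u i * m)) := by
    intro i m
    have hXt' : Xt i = ω ^ (t i * u i) * (X i * z ^ u i) := by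
      rw [hXt i, map_zpow, ← hω, mul_assoc]
    have hrel : z ^ u i * X i = ω ^ (t i * u i) * ω ^ (t i * u i) * (X i * z ^ u i) := by
      have h0 := hzX i (u i) 1
      rw [zpow_one] at h0
      rw [h0, ← zpow_add, show t i * u i + t i * u i = 2 * t i * (u i * 1) from by ring]
    have hq := qc_mul_zpow (d := ω ^ (t i * u i)) (x := X i) (y := z ^ u i)
      (fun g => hcen _ g) hrel m
    calc Xt i ^ m = (ω ^ (t i * u i) * (X i * z ^ u i)) ^ m := by rw [hXt']
      _ = (ω ^ (t i * u i)) ^ m * (X i * z ^ u i) ^ m :=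
          (show Commute (ω ^ (t i * u i)) (X i * z ^ u i) from hcen _ _).mul_zpow m
      _ = (ω ^ (t i * u i)) ^ m * ((ω ^ (t i * u i)) ^ (m * (m - 1)) * (X i ^ m * (z ^ u i) ^ m)) := by
          rw [hq]
      _ = (ω ^ (t i * u i)) ^ (m + m * (m - 1)) * (X i ^ m * (z ^ u i) ^ m) := by
          rw [← mul_assoc, ← zpow_add]
      _ = ω ^ (m * m * (t i * u i)) * (X i ^ m * z ^ (u i * m)) := by
          rw [← zpow_mul ω, ← zpow_mul z,
            show t i * u i * (m + m * (m - 1)) = m * m * (t i * u i) from by ring]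
  have hzcross : ∀ (p : ℤ) (l0 : List (Fin r)),
      z ^ p * (l0.map fun i => X i ^ a i).prod
        = ω ^ (2 * p * ((l0.map fun j => a j * t j).sum)) *
          ((l0.map fun i => X i ^ a i).prod * z ^ p) := by
    intro p l0
    induction l0 with
    | nil => simp
    | cons i l0 ih =>
      simp only [List.map_cons, List.prod_cons, List.sum_cons]
      set P := (l0.map fun i => X i ^ a i).prod with hP
      set T := (l0.map fun j => a j * t j).sum with hT
      rw [contE (hzX i p (a i)), ih, ωmove, ωmerge]
      simp only [mul_assoc]
      congr 2
      ring
  induction l with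
  | nil => simp [Eexp]
  | cons i l ih =>
    simp only [List.map_cons, List.prod_cons, List.sum_cons]
    rw [ih, hXtpow i (a i)]
    set P := (l.map fun i => X i ^ a i).prod with hP
    set T := (l.map fun j => a j * t j).sum with hT
    set S := (l.map fun i => a i * u i).sum with hS
    simp only [mul_assoc]
    rw [ωmove, ωmove, ωmerge, contE (hzcross (u i * a i) l), ωmove, ωmerge, ← zpow_add z]
    simp only [mul_comm (u i) (a i), ← hP, ← hT, ← hS]
    congr 2
    simp only [Eexp, ← hT]
    ring

/-- In the quantum torus setting with extending unit `z`, if `t` and `u`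
are gradings in direction `k` (`B_k t = 0`, `B_k u = 0`), then mutation of the re-scaled
seed in direction `k` produces the re-scaling of the mutated variable:
`M̃(b_k^+) + M̃(b_k^-) = v^(t'_k u'_k) (M(b_k^+) + M(b_k^-)) z^(u'_k)` where
`t'_k = b_k^+ · t = b_k^- · t` and `u'_k = b_k^+ · u = b_k^- · u`. -/
theorem rescaled_seed_mutation (K : Type*) [Field K] (A : Type*) [Ring A]
    [Algebra K A] (v : K) (hv : v ≠ 0) (r : ℕ) (hr : 0 < r)
    (L : Matrix (Fin r) (Fin r) ℤ) (hL : L.transpose = -L)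
    (X : Fin r → Aˣ)
    (hX : ∀ i j, (X i : A) * (X j : A) =
      algebraMap K A ((v ^ 2) ^ L i j) * ((X j : A) * (X i : A)))
    (t u : Fin r → ℤ) (z : Aˣ)
    (hz : ∀ i, (z : A) * (X i : A) = algebraMap K A ((v ^ 2) ^ t i) * ((X i : A) * (z : A)))
    (B : Matrix (Fin r) (Fin r) ℤ) (hB : B.transpose = -B) (k : Fin r)
    (hBt : ∑ i, B k i * t i = 0) (hBu : ∑ i, B k i * u i = 0)
    (Xt : Fin r → Aˣ)
    (hXt : ∀ i, Xt i =
      Units.map (algebraMap K A).toMonoidHom (Units.mk0 v hv ^ (t i * u i)) * X i * z ^ u i)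
    (Lt : Matrix (Fin r) (Fin r) ℤ)
    (hLt : ∀ i j, Lt i j = L i j - (t i * u j - t j * u i))
    (M Mt : (Fin r → ℤ) → A)
    (hM : ∀ a, M a =
      algebraMap K A (v ^ (∑ i, ∑ j, if i < j then a i * a j * L j i else 0)) *
        ((List.finRange r).map (fun i => ((X i ^ a i : Aˣ) : A))).prod)
    (hMt : ∀ a, Mt a =
      algebraMap K A (v ^ (∑ i, ∑ j, if i < j then a i * a j * Lt j i else 0)) *
        ((List.finRange r).map (fun i => ((Xt i ^ a i : Aˣ) : A))).prod)
    (bkp bkm : Fin r → ℤ)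
    (hbkp : ∀ i, bkp i = if i = k then -1 else max (B i k) 0)
    (hbkm : ∀ i, bkm i = if i = k then -1 else max (-(B i k)) 0) :
    (∑ i, bkp i * t i) = (∑ i, bkm i * t i) ∧
    (∑ i, bkp i * u i) = (∑ i, bkm i * u i) ∧
    Mt bkp + Mt bkm =
      algebraMap K A (v ^ ((∑ i, bkp i * t i) * (∑ i, bkp i * u i))) *
        ((M bkp + M bkm) * ((z ^ (∑ i, bkp i * u i) : Aˣ) : A)) := by
  have hBsym : ∀ i, B i k = - B k i := fun i => by
    have h0 := congrFun (congrFun hB k) i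
    simpa [Matrix.transpose_apply] using h0
  have hBkk : B k k = 0 := by have := hBsym k; omega
  have hsum : ∀ s : Fin r → ℤ, (∑ i, B k i * s i) = 0 →
      (∑ i, bkp i * s i) = (∑ i, bkm i * s i) := by
    intro s hs
    have h0 : ∑ i, (bkp i * s i - bkm i * s i)
        = ∑ i, ((-(B k i)) * s i - (if i = k then (-(B k i)) * s i else 0)) := by
      refine Finset.sum_congr rfl fun i _ => ?_
      rw [hbkp i, hbkm i]
      split_ifs with h
      · ring
      · have h2 : max (B i k) 0 - max (-(B i k)) 0 = B i k := by omega
        have h3 : max (B i k) 0 * s i - max (-(B i k)) 0 * s i = B i k * s i := by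
          calc max (B i k) 0 * s i - max (-(B i k)) 0 * s i
              = (max (B i k) 0 - max (-(B i k)) 0) * s i := by ring
            _ = B i k * s i := by rw [h2]
        rw [h3, hBsym i]
        ring
    have h1 : (∑ i, bkp i * s i) - (∑ i, bkm i * s i)
        = ∑ i, (bkp i * s i - bkm i * s i) := (Finset.sum_sub_distrib _ _).symm
    have h2 : ∑ i, ((-(B k i)) * s i - (if i = k then (-(B k i)) * s i else 0))
        = (∑ i, (-(B k i)) * s i) - (∑ i, if i = k then (-(B k i)) * s i else 0) :=
      Finset.sum_sub_distrib _ _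
    have h3 : ∑ i, (-(B k i)) * s i = 0 := by
      simp only [neg_mul, Finset.sum_neg_distrib, hs, neg_zero]
    have h4 : (∑ i : Fin r, if i = k then (-(B k i)) * s i else 0) = 0 := by
      rw [Finset.sum_ite_eq' Finset.univ k (fun i => (-(B k i)) * s i)]
      simp [hBkk]
    omega
  refine ⟨hsum t hBt, hsum u hBu, ?_⟩
  have key : ∀ a : Fin r → ℤ, Mt a
      = algebraMap K A (v ^ ((∑ i, a i * t i) * (∑ i, a i * u i)))
        * (M a * ((z ^ (∑ i, a i * u i) : Aˣ) : A)) := by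
    intro a
    have hcl : ∀ (Y : Fin r → Aˣ),
        ((List.finRange r).map (fun i => ((Y i ^ a i : Aˣ) : A))).prod
        = ((((List.finRange r).map (fun i => Y i ^ a i)).prod : Aˣ) : A) := by
      intro Y
      have h5 := map_list_prod (Units.coeHom A) ((List.finRange r).map (fun i => Y i ^ a i))
      rw [List.map_map] at h5
      exact h5.symm
    rw [hMt a, hM a, hcl Xt, hcl X,
      mono_rescale v hv X t u z hz Xt hXt a (List.finRange r),
      Units.val_mul, Units.val_mul, omega_coe v hv,
      ← mul_assoc, ← map_mul, ← zpow_add₀ hv,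
      arith t u a L Lt hLt,
      zpow_add₀ hv, map_mul,
      ← Fin.sum_univ_def (fun i => a i * u i)]
    simp only [mul_assoc]
  rw [key bkp, key bkm, ← hsum t hBt, ← hsum u hBu, add_mul, mul_add]
end
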